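/- Let D ⊆ ℝ² be a nonempty open connected set and let Φ₀ : D → 𝔹 have continuously differentiable real components and satisfy the Cauchy–Riemann analogue ∂Φ₀/∂y = (∂Φ₀/∂x)·e₂ on D. If U₁[Φ₀(x,y)] = 0 and U₃[Φ₀(x,y)] = 0 for all (x,y) ∈ D, then there exist real numbers k, n₁, n₂ such that Φ₀(x,y) = i·k·(x·e₁ + y·e₂) + i·(n₁·e₁ + n₂·e₂) for all (x,y) ∈ D. -/

import Mathlib

/-- The biharmonic algebra `𝔹`, realized as the dual numbers over `ℂ`. -/
noncomputable abbrev 𝔹 : Type := DualNumber ℂ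

/-- The basis element `e₁ = 1` of the biharmonic algebra. -/
noncomputable def e₁ : 𝔹 := 1

/-- The basis element `e₂ = i + ε` of the biharmonic algebra. -/
noncomputable def e₂ : 𝔹 := Complex.I • 1 + DualNumber.eps

/-- First real component in the decomposition `a = U₁·e₁ + U₂·i·e₁ + U₃·e₂ + U₄·i·e₂`. -/
noncomputable def U₁ (a : 𝔹) : ℝ := a.fst.re + a.snd.im

/-- Third real component in the decomposition `a = U₁·e₁ + U₂·i·e₁ + U₃·e₂ + U₄·i·e₂`. -/
noncomputable def U₃ (a : 𝔹) : ℝ := a.snd.re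

/-- Partial derivative in the `x`-direction. -/
noncomputable def pdx {E : Type*} [NormedAddCommGroup E] [NormedSpace ℝ E]
    (f : ℝ × ℝ → E) (p : ℝ × ℝ) : E := fderiv ℝ f p (1, 0)

/-- Partial derivative in the `y`-direction. -/
noncomputable def pdy {E : Type*} [NormedAddCommGroup E] [NormedSpace ℝ E]
    (f : ℝ × ℝ → E) (p : ℝ × ℝ) : E := fderiv ℝ f p (0, 1)

open TrivSqZeroExt Complex Filter Set Metric

/-- Constancy from vanishing derivative on an unordered interval. -/
lemma const_of_hasDerivAt_zero' {E : Type*} [NormedAddCommGroup E] [NormedSpace ℝ E]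
    {φ : ℝ → E} {a x : ℝ}
    (h : ∀ s ∈ Set.uIcc a x, HasDerivAt φ 0 s) : φ x = φ a := by
  rcases le_total a x with hax | hax
  · have hIcc : Set.Icc a x ⊆ Set.uIcc a x := by rw [Set.uIcc_of_le hax]
    exact constant_of_has_deriv_right_zero
      (fun s hs => (h s (hIcc hs)).continuousAt.continuousWithinAt)
      (fun s hs => (h s (hIcc (Set.mem_Icc_of_Ico hs))).hasDerivWithinAt)
      x (Set.right_mem_Icc.2 hax)
  · have hIcc : Set.Icc x a ⊆ Set.uIcc a x := by rw [Set.uIcc_of_ge hax]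
    exact (constant_of_has_deriv_right_zero
      (fun s hs => (h s (hIcc hs)).continuousAt.continuousWithinAt)
      (fun s hs => (h s (hIcc (Set.mem_Icc_of_Ico hs))).hasDerivWithinAt)
      a (Set.right_mem_Icc.2 hax)).symm

/-- `TrivSqZeroExt.fst` as a real-linear continuous map on `𝔹`. -/
noncomputable def fstR : 𝔹 →L[ℝ] ℂ := (TrivSqZeroExt.fstCLM ℂ ℂ).restrictScalars ℝ

/-- `TrivSqZeroExt.snd` as a real-linear continuous map on `𝔹`. -/
noncomputable def sndR : 𝔹 →L[ℝ] ℂ := (TrivSqZeroExt.sndCLM ℂ ℂ).restrictScalars ℝ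

@[simp] lemma fstR_apply (a : 𝔹) : fstR a = TrivSqZeroExt.fst a := rfl
@[simp] lemma sndR_apply (a : 𝔹) : sndR a = TrivSqZeroExt.snd a := rfl

/-- The candidate affine (linear part) map. -/
noncomputable def Psi (k : ℝ) (q : ℝ × ℝ) : 𝔹 :=
  TrivSqZeroExt.inl (Complex.I * (k : ℂ) * (q.1 : ℂ) - (k : ℂ) * (q.2 : ℂ))
    + TrivSqZeroExt.inr (Complex.I * (k : ℂ) * (q.2 : ℂ))

@[simp] lemma Psi_fst (k : ℝ) (q : ℝ × ℝ) :
    TrivSqZeroExt.fst (Psi k q) = Complex.I * (k : ℂ) * (q.1 : ℂ) - (k : ℂ) * (q.2 : ℂ) := by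
  simp [Psi]

@[simp] lemma Psi_snd (k : ℝ) (q : ℝ × ℝ) :
    TrivSqZeroExt.snd (Psi k q) = Complex.I * (k : ℂ) * (q.2 : ℂ) := by
  simp [Psi]

lemma Psi_sub (k : ℝ) (q p : ℝ × ℝ) : Psi k (q - p) = Psi k q - Psi k p := by
  apply TrivSqZeroExt.ext <;>
    simp [Prod.fst_sub, Prod.snd_sub] <;> push_cast <;> ring

lemma fst_e₂ : TrivSqZeroExt.fst e₂ = Complex.I := by
  rw [e₂, TrivSqZeroExt.fst_add, TrivSqZeroExt.fst_smul, TrivSqZeroExt.fst_one,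
    DualNumber.fst_eps, smul_eq_mul, mul_one, add_zero]

lemma snd_e₂ : TrivSqZeroExt.snd e₂ = 1 := by
  rw [e₂, TrivSqZeroExt.snd_add, TrivSqZeroExt.snd_smul, TrivSqZeroExt.snd_one,
    DualNumber.snd_eps, smul_zero, zero_add]

/-- If `Φ₀` is continuously differentiable on a nonempty open connected set `D`, satisfies
the Cauchy–Riemann analogue `∂Φ₀/∂y = (∂Φ₀/∂x)·e₂` on `D`, and its components `U₁[Φ₀]` and
`U₃[Φ₀]` vanish identically on `D`, then there exist real numbers `k, n₁, n₂` with
`Φ₀(x,y) = i·k·(x·e₁ + y·e₂) + i·(n₁·e₁ + n₂·e₂)` on `D`. -/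
theorem monogenic_vanishing_components
    (D : Set (ℝ × ℝ)) (hD : IsOpen D) (hDconn : IsConnected D)
    (Φ₀ : ℝ × ℝ → 𝔹)
    (hC1 : ContDiffOn ℝ 1 Φ₀ D)
    (hCR : ∀ p ∈ D, pdy Φ₀ p = pdx Φ₀ p * e₂)
    (hU₁ : ∀ p ∈ D, U₁ (Φ₀ p) = 0)
    (hU₃ : ∀ p ∈ D, U₃ (Φ₀ p) = 0) :
    ∃ k n₁ n₂ : ℝ,
      ∀ p ∈ D, Φ₀ p = (Complex.I * (k : ℂ)) • ((p.1 : ℂ) • e₁ + (p.2 : ℂ) • e₂)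
        + Complex.I • ((n₁ : ℂ) • e₁ + (n₂ : ℂ) • e₂) := by
  classical
  obtain ⟨p₀, hp₀⟩ := hDconn.nonempty
  have hdiff : ∀ p ∈ D, DifferentiableAt ℝ Φ₀ p := fun p hp =>
    (hC1.differentiableOn one_ne_zero).differentiableAt (hD.mem_nhds hp)
  set t : ℝ × ℝ → ℝ := fun p => ((pdx Φ₀ p).fst).im with ht
  -- define real-linear functionals for U₁ and U₃
  set L₁ : 𝔹 →L[ℝ] ℝ := Complex.reCLM.comp fstR + Complex.imCLM.comp sndR with hL₁def
  set L₃ : 𝔹 →L[ℝ] ℝ := Complex.reCLM.comp sndR with hL₃def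
  have hL₁ : ∀ a : 𝔹, L₁ a = U₁ a := fun a => by
    simp [hL₁def, U₁]
  have hL₃ : ∀ a : 𝔹, L₃ a = U₃ a := fun a => by
    simp [hL₃def, U₃]
  -- vanishing of derivatives of U₁ ∘ Φ₀ and U₃ ∘ Φ₀
  have hvanish : ∀ (L : 𝔹 →L[ℝ] ℝ), (∀ p ∈ D, L (Φ₀ p) = 0) →
      ∀ p ∈ D, ∀ v : ℝ × ℝ, L (fderiv ℝ Φ₀ p v) = 0 := by
    intro L hL p hp v
    have hfun : (fun q => L (Φ₀ q)) =ᶠ[nhds p] (fun _ => (0:ℝ)) :=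
      Filter.eventuallyEq_of_mem (hD.mem_nhds hp) hL
    have h1 : fderiv ℝ (fun q => L (Φ₀ q)) p = 0 := by
      rw [hfun.fderiv_eq]
      exact fderiv_const_apply 0
    have h2 : fderiv ℝ (fun q => L (Φ₀ q)) p = L.comp (fderiv ℝ Φ₀ p) :=
      (L.hasFDerivAt.comp p (hdiff p hp).hasFDerivAt).fderiv
    have := h2.symm.trans h1
    calc L (fderiv ℝ Φ₀ p v) = (L.comp (fderiv ℝ Φ₀ p)) v := rfl
      _ = (0 : (ℝ × ℝ) →L[ℝ] ℝ) v := by rw [this]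
      _ = 0 := rfl
  have hV₁ : ∀ p ∈ D, ∀ v : ℝ × ℝ, L₁ (fderiv ℝ Φ₀ p v) = 0 :=
    hvanish L₁ (fun p hp => by rw [hL₁]; exact hU₁ p hp)
  have hV₃ : ∀ p ∈ D, ∀ v : ℝ × ℝ, L₃ (fderiv ℝ Φ₀ p v) = 0 :=
    hvanish L₃ (fun p hp => by rw [hL₃]; exact hU₃ p hp)
  -- structure of the derivative
  have hstruct : ∀ p ∈ D, (pdx Φ₀ p).fst = Complex.I * (t p : ℂ) ∧ (pdx Φ₀ p).snd = 0 ∧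
      (pdy Φ₀ p).fst = -(t p : ℂ) ∧ (pdy Φ₀ p).snd = Complex.I * (t p : ℂ) := by
    intro p hp
    set X : 𝔹 := pdx Φ₀ p with hX
    have hY : pdy Φ₀ p = X * e₂ := hCR p hp
    have hYfst : (pdy Φ₀ p).fst = X.fst * Complex.I := by
      rw [hY, TrivSqZeroExt.fst_mul, fst_e₂]
    have hYsnd : (pdy Φ₀ p).snd = X.fst + Complex.I * X.snd := by
      rw [hY, TrivSqZeroExt.snd_mul, fst_e₂, snd_e₂]
      rw [op_smul_eq_mul, smul_eq_mul, mul_one]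
      ring
    have a1 : X.fst.re + X.snd.im = 0 := by
      have := hV₁ p hp (1,0); rw [hL₁] at this; exact this
    have a3 : X.snd.re = 0 := by
      have := hV₃ p hp (1,0); rw [hL₃] at this; exact this
    have a4 : (pdy Φ₀ p).snd.re = 0 := by
      have := hV₃ p hp (0,1); rw [hL₃] at this; exact this
    rw [hYsnd] at a4
    have a4' : X.fst.re - X.snd.im = 0 := by
      simpa [Complex.add_re, Complex.mul_re, sub_eq_add_neg] using a4
    have hXfre : X.fst.re = 0 := by linarith
    have hXsim : X.snd.im = 0 := by linarith
    have hXsnd : X.snd = 0 := Complex.ext a3 hXsim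
    have hXfst : X.fst = Complex.I * (t p : ℂ) := by
      apply Complex.ext <;> simp [ht, ← hX, hXfre]
    refine ⟨hXfst, hXsnd, ?_, ?_⟩
    · rw [hYfst, hXfst]
      rw [mul_comm Complex.I ((t p : ℂ)), mul_assoc, Complex.I_mul_I]
      ring
    · rw [hYsnd, hXfst, hXsnd]
      ring
  -- slice derivatives
  have hslicex : ∀ p ∈ D, ∀ (L : 𝔹 →L[ℝ] ℂ),
      HasDerivAt (fun s => L (Φ₀ (s, p.2))) (L (pdx Φ₀ p)) p.1 := by
    intro p hp L
    have h1 : HasDerivAt (fun s : ℝ => (s, p.2)) ((1:ℝ), (0:ℝ)) p.1 :=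
      (hasDerivAt_id _).prodMk (hasDerivAt_const _ _)
    have h2 := (L.hasFDerivAt.comp p (hdiff p hp).hasFDerivAt).comp_hasDerivAt p.1 h1
    simpa [pdx, Function.comp_def] using h2
  have hslicey : ∀ p ∈ D, ∀ (L : 𝔹 →L[ℝ] ℂ),
      HasDerivAt (fun s => L (Φ₀ (p.1, s))) (L (pdy Φ₀ p)) p.2 := by
    intro p hp L
    have h1 : HasDerivAt (fun s : ℝ => (p.1, s)) ((0:ℝ), (1:ℝ)) p.2 :=
      (hasDerivAt_const _ _).prodMk (hasDerivAt_id _)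
    have h2 := (L.hasFDerivAt.comp p (hdiff p hp).hasFDerivAt).comp_hasDerivAt p.2 h1
    simpa [pdy, Function.comp_def] using h2
  -- the components g and F
  set g : ℝ × ℝ → ℂ := fun q => TrivSqZeroExt.snd (Φ₀ q) with hg
  set F : ℝ × ℝ → ℂ := fun q => TrivSqZeroExt.fst (Φ₀ q) - Complex.I * TrivSqZeroExt.snd (Φ₀ q)
    with hF
  have hgx : ∀ p ∈ D, HasDerivAt (fun s => g (s, p.2)) 0 p.1 := by
    intro p hp
    have := hslicex p hp sndR
    simpa [hg, (hstruct p hp).2.1] using this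
  have hgy : ∀ p ∈ D, HasDerivAt (fun s => g (p.1, s)) (Complex.I * (t p : ℂ)) p.2 := by
    intro p hp
    have := hslicey p hp sndR
    simpa [hg, (hstruct p hp).2.2.2] using this
  have hFx : ∀ p ∈ D, HasDerivAt (fun s => F (s, p.2)) (Complex.I * (t p : ℂ)) p.1 := by
    intro p hp
    have h1 := hslicex p hp fstR
    have h2 := hslicex p hp sndR
    have := h1.fun_sub (h2.const_mul Complex.I)
    simpa [hF, (hstruct p hp).1, (hstruct p hp).2.1] using this
  have hFy : ∀ p ∈ D, HasDerivAt (fun s => F (p.1, s)) 0 p.2 := by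
    intro p hp
    have h1 := hslicey p hp fstR
    have h2 := hslicey p hp sndR
    have := h1.fun_sub (h2.const_mul Complex.I)
    have hval : (pdy Φ₀ p).fst - Complex.I * (pdy Φ₀ p).snd = 0 := by
      rw [(hstruct p hp).2.2.1, (hstruct p hp).2.2.2]
      linear_combination (-(t p : ℂ)) * Complex.I_sq
    simpa [hF, hval] using this
  -- the local structure result
  set A : ℝ × ℝ → ℝ × 𝔹 := fun p => (t p, Φ₀ p - Psi (t p) p) with hA
  have hloc : ∀ p ∈ D, ∃ r > 0, Metric.ball p r ⊆ D ∧
      ∀ q ∈ Metric.ball p r, A q = A p := by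
    rintro ⟨a, b⟩ hp
    obtain ⟨r, hr, hrD⟩ := Metric.isOpen_iff.1 hD (a, b) hp
    refine ⟨r, hr, hrD, ?_⟩
    set B := Metric.ball ((a : ℝ), (b : ℝ)) r with hB
    have key : ∀ x y : ℝ, (x, y) ∈ B ↔ |x - a| < r ∧ |y - b| < r := by
      intro x y
      rw [hB, Metric.mem_ball, Prod.dist_eq, max_lt_iff]
      simp [Real.dist_eq]
    have habs : ∀ {u v s : ℝ}, s ∈ Set.uIcc u v → |v - u| < r → |s - u| < r := by
      intro u v s hs hv
      rw [Set.mem_uIcc] at hs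
      rw [abs_sub_lt_iff] at *
      rcases hs with ⟨h1, h2⟩ | ⟨h1, h2⟩ <;> constructor <;> linarith
    -- Step 1 : horizontal constancy of g
    have hgconst : ∀ x y : ℝ, (x, y) ∈ B → g (x, y) = g (a, y) := by
      intro x y hxy
      rcases (key x y).1 hxy with ⟨h1, h2⟩
      apply const_of_hasDerivAt_zero' (φ := fun s => g (s, y))
      intro s hs
      have hmem : (s, y) ∈ B := (key s y).2 ⟨habs hs h1, h2⟩
      exact hgx (s, y) (hrD hmem)
    -- Step 2 : vertical constancy of F
    have hFconst : ∀ x y : ℝ, (x, y) ∈ B → F (x, y) = F (x, b) := by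
      intro x y hxy
      rcases (key x y).1 hxy with ⟨h1, h2⟩
      apply const_of_hasDerivAt_zero' (φ := fun s => F (x, s))
      intro s hs
      have hmem : (x, s) ∈ B := (key x s).2 ⟨h1, habs hs h2⟩
      exact hFy (x, s) (hrD hmem)
    -- Step 3 : t is constant on the ball
    have hI : (Complex.I : ℂ) ≠ 0 := Complex.I_ne_zero
    have ht1 : ∀ x y : ℝ, (x, y) ∈ B → t (x, y) = t (a, y) := by
      intro x y hxy
      rcases (key x y).1 hxy with ⟨h1, h2⟩
      have hay : (a, y) ∈ B := (key a y).2 ⟨by simpa using hr, h2⟩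
      have hd1 : HasDerivAt (fun s => g (x, s)) (Complex.I * (t (x, y) : ℂ)) y :=
        hgy (x, y) (hrD hxy)
      have hd2 : HasDerivAt (fun s => g (a, s)) (Complex.I * (t (a, y) : ℂ)) y :=
        hgy (a, y) (hrD hay)
      have hopen : IsOpen {s : ℝ | (x, s) ∈ B} :=
        Metric.isOpen_ball.preimage (continuous_const.prodMk continuous_id)
      have hev : (fun s => g (a, s)) =ᶠ[nhds y] (fun s => g (x, s)) := by
        refine Filter.eventually_of_mem (hopen.mem_nhds hxy) ?_
        intro s hsmem
        exact (hgconst x s hsmem).symm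
      have hd1' : HasDerivAt (fun s => g (a, s)) (Complex.I * (t (x, y) : ℂ)) y :=
        HasDerivAt.congr_of_eventuallyEq hd1 hev
      have := hd2.unique hd1'
      exact_mod_cast (mul_left_cancel₀ hI this).symm
    have ht2 : ∀ x y : ℝ, (x, y) ∈ B → t (x, y) = t (x, b) := by
      intro x y hxy
      rcases (key x y).1 hxy with ⟨h1, h2⟩
      have hxb : (x, b) ∈ B := (key x b).2 ⟨h1, by simpa using hr⟩
      have hd1 : HasDerivAt (fun s => F (s, y)) (Complex.I * (t (x, y) : ℂ)) x :=
        hFx (x, y) (hrD hxy)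
      have hd2 : HasDerivAt (fun s => F (s, b)) (Complex.I * (t (x, b) : ℂ)) x :=
        hFx (x, b) (hrD hxb)
      have hopen : IsOpen {s : ℝ | (s, y) ∈ B} :=
        Metric.isOpen_ball.preimage (continuous_id.prodMk continuous_const)
      have hev : (fun s => F (s, b)) =ᶠ[nhds x] (fun s => F (s, y)) := by
        refine Filter.eventually_of_mem (hopen.mem_nhds hxy) ?_
        intro s hsmem
        exact (hFconst s y hsmem).symm
      have hd1' : HasDerivAt (fun s => F (s, b)) (Complex.I * (t (x, y) : ℂ)) x :=
        HasDerivAt.congr_of_eventuallyEq hd1 hev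
      have := hd2.unique hd1'
      exact_mod_cast (mul_left_cancel₀ hI this).symm
    have htconst : ∀ x y : ℝ, (x, y) ∈ B → t (x, y) = t (a, b) := by
      intro x y hxy
      rcases (key x y).1 hxy with ⟨h1, h2⟩
      have hay : (a, y) ∈ B := (key a y).2 ⟨by simpa using hr, h2⟩
      rw [ht1 x y hxy, ht2 a y hay]
    set k : ℝ := t (a, b) with hk
    -- Step 4 : value of g
    have hgval : ∀ x y : ℝ, (x, y) ∈ B →
        g (x, y) = g (a, b) + Complex.I * (k : ℂ) * ((y : ℂ) - (b : ℂ)) := by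
      intro x y hxy
      rcases (key x y).1 hxy with ⟨h1, h2⟩
      rw [hgconst x y hxy]
      have hmain : (fun s : ℝ => g (a, s) - Complex.I * (k : ℂ) * (s : ℂ)) y
          = (fun s : ℝ => g (a, s) - Complex.I * (k : ℂ) * (s : ℂ)) b := by
        apply const_of_hasDerivAt_zero'
          (φ := fun s : ℝ => g (a, s) - Complex.I * (k : ℂ) * (s : ℂ))
        intro s hs
        have hmem : (a, s) ∈ B := (key a s).2 ⟨by simpa using hr, habs hs h2⟩
        have hd := hgy (a, s) (hrD hmem)
        have hts : t (a, s) = k := htconst a s hmem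
        have hlin : HasDerivAt (fun s : ℝ => Complex.I * (k : ℂ) * (s : ℂ))
            (Complex.I * (k : ℂ)) s := by
          simpa using (Complex.ofRealCLM.hasDerivAt (x := s)).const_mul (Complex.I * (k : ℂ))
        have := hd.fun_sub hlin
        simpa [hts] using this
      simp only at hmain
      have := sub_eq_sub_iff_sub_eq_sub.1 hmain
      linear_combination hmain
    -- Step 5 : value of F
    have hFval : ∀ x y : ℝ, (x, y) ∈ B →
        F (x, y) = F (a, b) + Complex.I * (k : ℂ) * ((x : ℂ) - (a : ℂ)) := by
      intro x y hxy
      rcases (key x y).1 hxy with ⟨h1, h2⟩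
      rw [hFconst x y hxy]
      have hmain : (fun s : ℝ => F (s, b) - Complex.I * (k : ℂ) * (s : ℂ)) x
          = (fun s : ℝ => F (s, b) - Complex.I * (k : ℂ) * (s : ℂ)) a := by
        apply const_of_hasDerivAt_zero'
          (φ := fun s : ℝ => F (s, b) - Complex.I * (k : ℂ) * (s : ℂ))
        intro s hs
        have hmem : (s, b) ∈ B := (key s b).2 ⟨habs hs h1, by simpa using hr⟩
        have hd := hFx (s, b) (hrD hmem)
        have hts : t (s, b) = k := htconst s b hmem
        have hlin : HasDerivAt (fun s : ℝ => Complex.I * (k : ℂ) * (s : ℂ))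
            (Complex.I * (k : ℂ)) s := by
          simpa using (Complex.ofRealCLM.hasDerivAt (x := s)).const_mul (Complex.I * (k : ℂ))
        have := hd.fun_sub hlin
        simpa [hts] using this
      simp only at hmain
      linear_combination hmain
    -- conclude
    rintro ⟨x, y⟩ hq
    have htq : t (x, y) = k := htconst x y hq
    have hPhi : Φ₀ (x, y) = Φ₀ (a, b) + Psi k ((x, y) - (a, b)) := by
      apply TrivSqZeroExt.ext
      · have h1 := hFval x y hq
        have h2 := hgval x y hq
        have hfstq : TrivSqZeroExt.fst (Φ₀ (x, y)) = F (x, y) + Complex.I * g (x, y) := by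
          simp [hF, hg]
        have hfstc : TrivSqZeroExt.fst (Φ₀ (a, b)) = F (a, b) + Complex.I * g (a, b) := by
          simp [hF, hg]
        rw [TrivSqZeroExt.fst_add, hfstq, hfstc, h1, h2, Psi_fst]
        simp only [Prod.fst_sub, Prod.snd_sub]
        push_cast
        linear_combination (Complex.I_sq) * ((k : ℂ) * ((y : ℂ) - (b : ℂ)))
      · have h2 := hgval x y hq
        rw [TrivSqZeroExt.snd_add, Psi_snd]
        show g (x, y) = g (a, b) + _
        rw [h2]
        simp only [Prod.fst_sub, Prod.snd_sub]
        push_cast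
        ring
    rw [hA]
    show (t (x, y), Φ₀ (x, y) - Psi (t (x, y)) (x, y)) = (k, Φ₀ (a, b) - Psi k (a, b))
    rw [htq, hPhi, Psi_sub, Prod.mk.injEq]
    exact ⟨rfl, by abel⟩
  -- globalization via connectedness
  have hloc' : ∀ p : ℝ × ℝ, ∃ rp : ℝ, p ∈ D →
      0 < rp ∧ Metric.ball p rp ⊆ D ∧ ∀ q ∈ Metric.ball p rp, A q = A p := by
    intro p
    by_cases hp : p ∈ D
    · obtain ⟨r, hr, h1, h2⟩ := hloc p hp
      exact ⟨r, fun _ => ⟨hr, h1, h2⟩⟩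
    · exact ⟨1, fun h => absurd h hp⟩
  choose r hr using hloc'
  have hglob : ∀ p ∈ D, A p = A p₀ := by
    by_contra hcon
    push_neg at hcon
    obtain ⟨p₁, hp₁D, hp₁⟩ := hcon
    set U : Set (ℝ × ℝ) := ⋃ p ∈ {p ∈ D | A p = A p₀}, Metric.ball p (r p) with hU
    set V : Set (ℝ × ℝ) := ⋃ p ∈ {p ∈ D | A p ≠ A p₀}, Metric.ball p (r p) with hV
    have hUopen : IsOpen U := isOpen_biUnion fun p _ => Metric.isOpen_ball
    have hVopen : IsOpen V := isOpen_biUnion fun p _ => Metric.isOpen_ball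
    have hcover : D ⊆ U ∪ V := by
      intro p hp
      by_cases hAp : A p = A p₀
      · exact Or.inl (Set.mem_biUnion ⟨hp, hAp⟩ (Metric.mem_ball_self (hr p hp).1))
      · exact Or.inr (Set.mem_biUnion ⟨hp, hAp⟩ (Metric.mem_ball_self (hr p hp).1))
    have hUmem : ∀ q ∈ U, A q = A p₀ := by
      intro q hq
      obtain ⟨p, hp, hqball⟩ := Set.mem_iUnion₂.1 hq
      rw [(hr p hp.1).2.2 q hqball, hp.2]
    have hVmem : ∀ q ∈ V, A q ≠ A p₀ := by
      intro q hq
      obtain ⟨p, hp, hqball⟩ := Set.mem_iUnion₂.1 hq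
      rw [(hr p hp.1).2.2 q hqball]
      exact hp.2
    have hne : (D ∩ (U ∩ V)).Nonempty := by
      apply hDconn.isPreconnected U V hUopen hVopen hcover
      · exact ⟨p₀, hp₀, Set.mem_biUnion ⟨hp₀, rfl⟩ (Metric.mem_ball_self (hr p₀ hp₀).1)⟩
      · exact ⟨p₁, hp₁D, Set.mem_biUnion ⟨hp₁D, hp₁⟩ (Metric.mem_ball_self (hr p₁ hp₁D).1)⟩
    obtain ⟨q, _, hqU, hqV⟩ := hne
    exact hVmem q hqV (hUmem q hqU)
  -- extract constants
  set k : ℝ := t p₀ with hkdef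
  set C : 𝔹 := Φ₀ p₀ - Psi k p₀ with hC
  have hPhiAll : ∀ p ∈ D, Φ₀ p = C + Psi k p := by
    intro p hp
    have := hglob p hp
    rw [hA] at this
    have h1 : t p = k := congrArg Prod.fst this
    have h2 : Φ₀ p - Psi (t p) p = C := congrArg Prod.snd this
    rw [h1] at h2
    rw [← h2]
    abel
  -- component facts for C
  have hCsnd_re : (TrivSqZeroExt.snd C).re = 0 := by
    have h3 := hU₃ p₀ hp₀
    rw [U₃] at h3
    rw [hC]
    simp [TrivSqZeroExt.snd_sub, Complex.sub_re, h3]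
  have hCfst_re : (TrivSqZeroExt.fst C).re = -(TrivSqZeroExt.snd C).im := by
    have h1 := hU₁ p₀ hp₀
    rw [U₁] at h1
    rw [hC]
    simp [TrivSqZeroExt.fst_sub, TrivSqZeroExt.snd_sub, Complex.sub_re, Complex.sub_im,
      Complex.mul_re, Complex.mul_im]
    linarith
  refine ⟨k, (TrivSqZeroExt.fst C).im, (TrivSqZeroExt.snd C).im, ?_⟩
  intro p hp
  rw [hPhiAll p hp]
  apply TrivSqZeroExt.ext
  · rw [TrivSqZeroExt.fst_add, Psi_fst]
    have hrhs : TrivSqZeroExt.fst ((Complex.I * (k : ℂ)) • ((p.1 : ℂ) • e₁ + (p.2 : ℂ) • e₂)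
        + Complex.I • (((TrivSqZeroExt.fst C).im : ℂ) • e₁ + ((TrivSqZeroExt.snd C).im : ℂ) • e₂))
        = (Complex.I * (k : ℂ)) * ((p.1 : ℂ) + (p.2 : ℂ) * Complex.I)
          + Complex.I * (((TrivSqZeroExt.fst C).im : ℂ) + ((TrivSqZeroExt.snd C).im : ℂ) * Complex.I) := by
      simp [TrivSqZeroExt.fst_add, TrivSqZeroExt.fst_smul, e₁, fst_e₂, smul_eq_mul, -Complex.coe_smul]
      ring
    rw [hrhs]
    have hCfst : TrivSqZeroExt.fst C =
        Complex.I * ((TrivSqZeroExt.fst C).im : ℂ) + ((TrivSqZeroExt.snd C).im : ℂ) * Complex.I * Complex.I := by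
      apply Complex.ext <;>
        simp [Complex.add_re, Complex.add_im, Complex.mul_re, Complex.mul_im, hCfst_re]
    conv_lhs => rw [hCfst]
    linear_combination (-(k : ℂ) * (p.2 : ℂ)) * Complex.I_sq
  · rw [TrivSqZeroExt.snd_add, Psi_snd]
    have hrhs : TrivSqZeroExt.snd ((Complex.I * (k : ℂ)) • ((p.1 : ℂ) • e₁ + (p.2 : ℂ) • e₂)
        + Complex.I • (((TrivSqZeroExt.fst C).im : ℂ) • e₁ + ((TrivSqZeroExt.snd C).im : ℂ) • e₂))
        = (Complex.I * (k : ℂ)) * (p.2 : ℂ) + Complex.I * ((TrivSqZeroExt.snd C).im : ℂ) := by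
      simp [TrivSqZeroExt.snd_add, TrivSqZeroExt.snd_smul, e₁, snd_e₂, smul_eq_mul, -Complex.coe_smul]
    rw [hrhs]
    have hCsnd : TrivSqZeroExt.snd C = Complex.I * ((TrivSqZeroExt.snd C).im : ℂ) := by
      apply Complex.ext <;> simp [hCsnd_re]
    conv_lhs => rw [hCsnd]
    ring
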